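/- arXiv:2309.03112 — 2 statements merged into one kernel-verified Lean document; each statement's English description precedes it below -/
import Mathlib

section
/- Let I be an invertible 3×3 real matrix (inertia tensor), C a 3×3 real matrix (viscous coefficient), and N* : ℝ → ℝ³ a continuous function (deterministic torque). Let R : ℝ → M₃(ℝ) and ℓ : ℝ → ℝ³ be differentiable with R(t) ∈ SO(3) for all t, and set h(t) = h(R(t), ℓ(t)). Then the pair of equations (R(t)ᵀṘ(t))^∨ = I⁻¹ℓ(t) and ℓ̇(t) + (I⁻¹ℓ(t)) × ℓ(t) = −C I⁻¹ℓ(t) + N*(t) holds for all t if and only if ḣ(t)h(t)⁻¹ = [[−(I⁻¹ℓ(t))^∧, −C I⁻¹ℓ(t) + N*(t)],[0ᵀ, 0]] for all t. -/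
open Matrix MeasureTheory
noncomputable section

/-- The hat map sending `ω ∈ ℝ³` to the skew-symmetric matrix `ω^∧`. -/
def hat (ω : Fin 3 → ℝ) : Matrix (Fin 3) (Fin 3) ℝ :=
  !![0, -ω 2, ω 1; ω 2, 0, -ω 0; -ω 1, ω 0, 0]

/-- The vee map, inverse of `hat` on skew-symmetric matrices. -/
def vee (A : Matrix (Fin 3) (Fin 3) ℝ) : Fin 3 → ℝ := ![A 2 1, A 0 2, A 1 0]

/-- Membership in SO(3): `RᵀR = 1` and `det R = 1`. -/
def SO3 (R : Matrix (Fin 3) (Fin 3) ℝ) : Prop := Rᵀ * R = 1 ∧ R.det = 1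

/-- The group element `h(R, ℓ) = [[Rᵀ, ℓ],[0ᵀ, 1]]` of `SO(3)^T ⋉ ℝ³`,
as a 4×4 matrix indexed by `Fin 3 ⊕ Fin 1`. -/
def hmat (R : Matrix (Fin 3) (Fin 3) ℝ) (l : Fin 3 → ℝ) :
    Matrix (Fin 3 ⊕ Fin 1) (Fin 3 ⊕ Fin 1) ℝ :=
  fromBlocks Rᵀ (replicateCol (Fin 1) l) 0 1

attribute [local instance] Matrix.normedAddCommGroup Matrix.normedSpace

/-- Entrywise characterization of `HasDerivAt` for matrix valued functions. -/
lemma hasDerivAt_matrix {m n : Type*} [Fintype m] [Fintype n]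
    {f : ℝ → Matrix m n ℝ} {f' : Matrix m n ℝ} {t : ℝ} :
    HasDerivAt f f' t ↔ ∀ i j, HasDerivAt (fun s => f s i j) (f' i j) t := by
  constructor
  · intro h i j
    exact hasDerivAt_pi.1 (hasDerivAt_pi.1 h i) j
  · intro h
    exact hasDerivAt_pi.2 fun i => hasDerivAt_pi.2 fun j => h i j

/-- Product rule for matrix-valued functions. -/
lemma HasDerivAt.matmul {n : Type*} [Fintype n]
    {f g : ℝ → Matrix n n ℝ} {f' g' : Matrix n n ℝ} {t : ℝ}
    (hf : HasDerivAt f f' t) (hg : HasDerivAt g g' t) :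
    HasDerivAt (fun s => f s * g s) (f' * g t + f t * g') t := by
  rw [hasDerivAt_matrix] at hf hg ⊢
  intro i j
  simp only [Matrix.mul_apply, Matrix.add_apply]
  rw [← Finset.sum_add_distrib]
  exact HasDerivAt.fun_sum fun k _ => (hf i k).mul (hg k j)

/-- Transposition commutes with the derivative. -/
lemma HasDerivAt.mtranspose {m n : Type*} [Fintype m] [Fintype n]
    {f : ℝ → Matrix m n ℝ} {f' : Matrix m n ℝ} {t : ℝ}
    (hf : HasDerivAt f f' t) :
    HasDerivAt (fun s => (f s)ᵀ) f'ᵀ t := by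
  rw [hasDerivAt_matrix] at hf ⊢
  intro i j
  exact hf j i

lemma hat_mulVec (ω v : Fin 3 → ℝ) : hat ω *ᵥ v = ω ⨯₃ v := by
  funext i
  fin_cases i <;>
    simp [hat, cross_apply, mulVec, dotProduct, Fin.sum_univ_three] <;> ring

lemma vee_hat (ω : Fin 3 → ℝ) : vee (hat ω) = ω := by
  funext i
  fin_cases i <;> simp [vee, hat]

lemma hat_vee_of_skew {A : Matrix (Fin 3) (Fin 3) ℝ} (h : Aᵀ = -A) :
    hat (vee A) = A := by
  have hs : ∀ i j, A j i = -A i j := fun i j => by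
    have := congrFun (congrFun h i) j
    simpa [Matrix.transpose_apply] using this
  ext i j
  fin_cases i <;> fin_cases j <;>
    simp [hat, vee] <;>
    linarith [hs 0 0, hs 1 1, hs 2 2, hs 0 1, hs 0 2, hs 1 2]

lemma hmat_inv {R : Matrix (Fin 3) (Fin 3) ℝ} {l : Fin 3 → ℝ} (h : Rᵀ * R = 1) :
    (hmat R l)⁻¹ = fromBlocks R (replicateCol (Fin 1) (-(R *ᵥ l))) 0 1 := by
  apply inv_eq_right_inv
  rw [hmat, fromBlocks_multiply]
  rw [h, ← replicateCol_mulVec, Matrix.mulVec_neg, Matrix.mulVec_mulVec, h, Matrix.one_mulVec]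
  simp [← replicateCol_add, ← fromBlocks_one]

lemma hasDerivAt_hmat {R : ℝ → Matrix (Fin 3) (Fin 3) ℝ} {l : ℝ → Fin 3 → ℝ}
    {R' : Matrix (Fin 3) (Fin 3) ℝ} {l' : Fin 3 → ℝ} {t : ℝ}
    (hR : HasDerivAt R R' t) (hl : HasDerivAt l l' t) :
    HasDerivAt (fun s => hmat (R s) (l s)) (fromBlocks R'ᵀ (replicateCol (Fin 1) l') 0 0) t := by
  rw [hasDerivAt_matrix] at hR ⊢
  have hl' := hasDerivAt_pi.1 hl
  rintro (i | i) (j | j) <;>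
    simp only [hmat, fromBlocks_apply₁₁, fromBlocks_apply₁₂, fromBlocks_apply₂₁,
      fromBlocks_apply₂₂, Matrix.transpose_apply, Matrix.replicateCol_apply, Matrix.zero_apply]
  · exact hR j i
  · exact hl' i
  · exact hasDerivAt_const _ _
  · have : i = j := Subsingleton.elim i j
    subst this
    simpa using hasDerivAt_const t ((1 : Matrix (Fin 1) (Fin 1) ℝ) i i)

/-- For an invertible inertia tensor `I`, a viscous coefficient `C` and a
continuous torque `N*`, the Euler equations `(RᵀṘ)^∨ = I⁻¹ℓ` and
`ℓ̇ + (I⁻¹ℓ) × ℓ = −CI⁻¹ℓ + N*` hold for all `t` iff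
`ḣh⁻¹ = [[−(I⁻¹ℓ)^∧, −CI⁻¹ℓ + N*],[0ᵀ, 0]]` for all `t`. -/
theorem euler_iff_group_sde (Imat C : Matrix (Fin 3) (Fin 3) ℝ) (hI : IsUnit Imat)
    (Nstar : ℝ → Fin 3 → ℝ) (hN : Continuous Nstar)
    (R : ℝ → Matrix (Fin 3) (Fin 3) ℝ) (l : ℝ → Fin 3 → ℝ)
    (hR : Differentiable ℝ R) (hl : Differentiable ℝ l)
    (hSO : ∀ t, SO3 (R t)) :
    (∀ t, vee ((R t)ᵀ * deriv R t) = Imat⁻¹ *ᵥ l t ∧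
        deriv l t + (Imat⁻¹ *ᵥ l t) ⨯₃ l t = -(C *ᵥ (Imat⁻¹ *ᵥ l t)) + Nstar t)
    ↔
    (∀ t, deriv (fun s => hmat (R s) (l s)) t * (hmat (R t) (l t))⁻¹ =
        fromBlocks (-hat (Imat⁻¹ *ᵥ l t))
          (replicateCol (Fin 1) (-(C *ᵥ (Imat⁻¹ *ᵥ l t)) + Nstar t)) 0 0) := by
  refine forall_congr' fun t => ?_
  have hRt : HasDerivAt R (deriv R t) t := (hR t).hasDerivAt
  have hlt : HasDerivAt l (deriv l t) t := (hl t).hasDerivAt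
  have hderiv : deriv (fun s => hmat (R s) (l s)) t
      = fromBlocks (deriv R t)ᵀ (replicateCol (Fin 1) (deriv l t)) 0 0 :=
    (hasDerivAt_hmat hRt hlt).deriv
  have hinv : (hmat (R t) (l t))⁻¹
      = fromBlocks (R t) (replicateCol (Fin 1) (-(R t *ᵥ l t))) 0 1 := hmat_inv (hSO t).1
  have hskew : (deriv R t)ᵀ * R t + (R t)ᵀ * deriv R t = 0 := by
    have h1 := hRt.mtranspose.matmul hRt
    have h2 : (fun s => (R s)ᵀ * R s) = fun _ => (1 : Matrix (Fin 3) (Fin 3) ℝ) :=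
      funext fun s => (hSO s).1
    rw [h2] at h1
    exact h1.unique (hasDerivAt_const t 1)
  have hS : (deriv R t)ᵀ * R t = -((R t)ᵀ * deriv R t) :=
    eq_neg_of_add_eq_zero_left hskew
  have hSkewS : ((R t)ᵀ * deriv R t)ᵀ = -((R t)ᵀ * deriv R t) := by
    rw [Matrix.transpose_mul, Matrix.transpose_transpose]
    exact hS
  rw [hderiv, hinv, fromBlocks_multiply]
  simp only [Matrix.mul_zero, Matrix.zero_mul, Matrix.mul_one, add_zero, zero_add]
  rw [fromBlocks_inj, ← replicateCol_mulVec, ← replicateCol_add, replicateCol_inj]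
  simp only [eq_self_iff_true, and_true]
  constructor
  · rintro ⟨h1, h2⟩
    have hhat : (R t)ᵀ * deriv R t = hat (Imat⁻¹ *ᵥ l t) := by
      rw [← h1]; exact (hat_vee_of_skew hSkewS).symm
    refine ⟨by rw [hS, hhat], ?_⟩
    rw [Matrix.mulVec_neg, Matrix.mulVec_mulVec, hS, Matrix.neg_mulVec, neg_neg, hhat,
      hat_mulVec, add_comm]
    exact h2
  · rintro ⟨h1, h2⟩
    have hhat : (R t)ᵀ * deriv R t = hat (Imat⁻¹ *ᵥ l t) := by
      have h3 : -((R t)ᵀ * deriv R t) = -hat (Imat⁻¹ *ᵥ l t) := by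
        rw [← hS]; exact h1
      exact neg_injective h3
    refine ⟨by rw [hhat, vee_hat], ?_⟩
    rw [Matrix.mulVec_neg, Matrix.mulVec_mulVec, hS, Matrix.neg_mulVec, neg_neg, hhat,
      hat_mulVec, add_comm] at h2
    exact h2
end
end

section
/- For every x = (ω, v) ∈ ℝ⁶, letting Σ = x xᵀ (a symmetric 6×6 matrix), the square of the adjoint matrix satisfies [ad(x)]² = ([[ω^∧, 0₃],[v^∧, ω^∧]])² = [[Σ', 0₃],[Σ'', Σ']], where Σ' and Σ'' are the 3×3 matrices built from the entries of Σ as specified in the context. Consequently, for any measure on ℝ⁶ with second-moment matrix Σ, the expectation of [ad(x)]² equals [[Σ', 0₃],[Σ'', Σ']]. -/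
open Matrix MeasureTheory
noncomputable section

/-- The 6×6 adjoint matrix `[ad(x)] = [[ω^∧, 0],[v^∧, ω^∧]]` for `x = (ω, v) ∈ ℝ⁶`,
with `ℝ⁶` realized as `(Fin 3 ⊕ Fin 3) → ℝ`. -/
def adMat (ω v : Fin 3 → ℝ) : Matrix (Fin 3 ⊕ Fin 3) (Fin 3 ⊕ Fin 3) ℝ :=
  fromBlocks (hat ω) 0 (hat v) (hat ω)

/-- The matrix `Σ'` built from a 6×6 matrix `Σ`.
Indices 1,…,6 of `ℝ⁶` correspond to `inl 0, inl 1, inl 2, inr 0, inr 1, inr 2`. -/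
def Sig' (S : Matrix (Fin 3 ⊕ Fin 3) (Fin 3 ⊕ Fin 3) ℝ) : Matrix (Fin 3) (Fin 3) ℝ :=
  !![-S (Sum.inl 1) (Sum.inl 1) - S (Sum.inl 2) (Sum.inl 2), S (Sum.inl 0) (Sum.inl 1), S (Sum.inl 0) (Sum.inl 2);
     S (Sum.inl 0) (Sum.inl 1), -S (Sum.inl 0) (Sum.inl 0) - S (Sum.inl 2) (Sum.inl 2), S (Sum.inl 1) (Sum.inl 2);
     S (Sum.inl 0) (Sum.inl 2), S (Sum.inl 1) (Sum.inl 2), -S (Sum.inl 0) (Sum.inl 0) - S (Sum.inl 1) (Sum.inl 1)]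

/-- The matrix `Σ''` built from a 6×6 matrix `Σ`. -/
def Sig'' (S : Matrix (Fin 3 ⊕ Fin 3) (Fin 3 ⊕ Fin 3) ℝ) : Matrix (Fin 3) (Fin 3) ℝ :=
  !![-2 * (S (Sum.inr 1) (Sum.inl 1) + S (Sum.inr 2) (Sum.inl 2)),
       S (Sum.inr 0) (Sum.inl 1) + S (Sum.inr 1) (Sum.inl 0),
       S (Sum.inr 0) (Sum.inl 2) + S (Sum.inr 2) (Sum.inl 0);
     S (Sum.inr 0) (Sum.inl 1) + S (Sum.inr 1) (Sum.inl 0),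
       -2 * (S (Sum.inr 0) (Sum.inl 0) + S (Sum.inr 2) (Sum.inl 2)),
       S (Sum.inr 1) (Sum.inl 2) + S (Sum.inr 2) (Sum.inl 1);
     S (Sum.inr 0) (Sum.inl 2) + S (Sum.inr 2) (Sum.inl 0),
       S (Sum.inr 1) (Sum.inl 2) + S (Sum.inr 2) (Sum.inl 1),
       -2 * (S (Sum.inr 0) (Sum.inl 0) + S (Sum.inr 1) (Sum.inl 1))]

set_option maxHeartbeats 2000000 in
/-- For `x = (ω,v) ∈ ℝ⁶` with `Σ = x xᵀ`, one has
`[ad(x)]² = [[Σ', 0],[Σ'', Σ']]`; consequently, for any probability measure on `ℝ⁶`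
(with square-integrable coordinates) with second-moment matrix `Σ`, the expectation of
`[ad(x)]²` equals `[[Σ', 0],[Σ'', Σ']]`. -/
theorem adSq_eq_Sig_blocks :
    (∀ ω v : Fin 3 → ℝ,
      (adMat ω v) ^ 2 =
        fromBlocks (Sig' (vecMulVec (Sum.elim ω v) (Sum.elim ω v))) 0
          (Sig'' (vecMulVec (Sum.elim ω v) (Sum.elim ω v)))
          (Sig' (vecMulVec (Sum.elim ω v) (Sum.elim ω v)))) ∧
    (∀ (μ : Measure ((Fin 3 ⊕ Fin 3) → ℝ)), IsProbabilityMeasure μ →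
      (∀ i, MemLp (fun x => x i) 2 μ) →
      ∀ S : Matrix (Fin 3 ⊕ Fin 3) (Fin 3 ⊕ Fin 3) ℝ,
        (∀ i j, S i j = ∫ x, x i * x j ∂μ) →
        (Matrix.of fun p q =>
            ∫ x, ((adMat (fun i => x (Sum.inl i)) (fun i => x (Sum.inr i))) ^ 2) p q ∂μ)
          = fromBlocks (Sig' S) 0 (Sig'' S) (Sig' S)) := by
  have key : ∀ ω v : Fin 3 → ℝ,
    (adMat ω v) ^ 2 =
      fromBlocks (Sig' (vecMulVec (Sum.elim ω v) (Sum.elim ω v))) 0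
        (Sig'' (vecMulVec (Sum.elim ω v) (Sum.elim ω v)))
        (Sig' (vecMulVec (Sum.elim ω v) (Sum.elim ω v))) := by
    intro ω v
    rw [pow_two, adMat, fromBlocks_multiply]
    have h1 : (hat ω) * (hat ω) = Sig' (vecMulVec (Sum.elim ω v) (Sum.elim ω v)) := by
      ext i j
      fin_cases i <;> fin_cases j <;>
        simp [hat, Sig', vecMulVec_apply, mul_apply, Fin.sum_univ_succ] <;> ring
    have h2 : (hat v) * (hat ω) + (hat ω) * (hat v)
        = Sig'' (vecMulVec (Sum.elim ω v) (Sum.elim ω v)) := by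
      ext i j
      fin_cases i <;> fin_cases j <;>
        simp [hat, Sig'', vecMulVec_apply, mul_apply, Fin.sum_univ_succ] <;> ring
    simp [h1, ← h2]
  refine ⟨key, ?_⟩
  intro μ hμ hL2 S hS
  have hint : ∀ i j : Fin 3 ⊕ Fin 3, Integrable (fun x => x i * x j) μ := by
    intro i j
    have h := ((((hL2 i).add (hL2 j)).integrable_sq).sub (hL2 i).integrable_sq).sub
      (hL2 j).integrable_sq
    have heq : (fun x : (Fin 3 ⊕ Fin 3) → ℝ => x i * x j)
        = fun x => (((x i + x j)^2 - (x i)^2) - (x j)^2) / 2 := by funext x; ring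
    rw [heq]
    exact h.div_const 2
  have hneg : ∀ i j : Fin 3 ⊕ Fin 3, Integrable (fun x => -(x i * x j)) μ :=
    fun i j => (hint i j).neg
  have hx : ∀ x : (Fin 3 ⊕ Fin 3) → ℝ,
      Sum.elim (fun i => x (Sum.inl i)) (fun i => x (Sum.inr i)) = x := by
    intro x; funext p; cases p <;> rfl
  ext p q
  simp only [Matrix.of_apply, key, hx]
  cases p <;> cases q <;> rename_i a b <;> fin_cases a <;> fin_cases b <;>
    simp only [fromBlocks_apply₁₁, fromBlocks_apply₁₂, fromBlocks_apply₂₁,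
      fromBlocks_apply₂₂, Sig', Sig'', vecMulVec_apply, Matrix.zero_apply, Matrix.of_apply, Fin.reduceFinMk,
      Matrix.cons_val', Matrix.cons_val_zero, Matrix.cons_val_one, Matrix.head_cons,
      Matrix.empty_val', Matrix.cons_val_fin_one, Matrix.head_fin_const,
      Fin.mk_zero, Fin.mk_one, Fin.isValue, Matrix.cons_val_two, Matrix.tail_cons, Fin.zero_eta, Fin.mk_one, Matrix.cons_val_succ, Matrix.cons_val_zero] <;>
    (try simp only [hS]) <;>
    first
      | rfl
      | exact integral_zero _ _
      | (exact integral_add (hint _ _) (hint _ _))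
      | (rw [← integral_add (hint _ _) (hint _ _)]; exact integral_const_mul _ _)
      | (rw [← integral_neg]; exact integral_sub (hneg _ _) (hint _ _))
end
end
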